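/- For every w ∈ S_n, the ascent and descent sets of w coincide with the ascent and descent index sets of its recording tableau: Asl(w) = Asi(Q(w)) and Dsl(w) = Dsi(Q(w)). -/

import Mathlib

open MvPolynomial

noncomputable section

namespace HigherSpecht

open scoped Classical

/-- A tableau: a filling of the plane (row, column), `0`-indexed, with `0` outside the diagram. -/
abbrev Tab := ℕ × ℕ → ℕ

/-- A permutation of `ℕ` represents an element of `Sₙ` (acting on `{1, …, n}`)
when it fixes `0` and everything above `n`. -/
def SuppIn (n : ℕ) (w : Equiv.Perm ℕ) : Prop := ∀ i, i = 0 ∨ n < i → w i = i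

/-- Descending locations of a permutation (one-line notation `w 1, …, w n`). -/
def DslSet (n : ℕ) (w : Equiv.Perm ℕ) : Finset ℕ :=
  (Finset.Ioo 0 n).filter fun i => w (i + 1) < w i

/-- Ascending locations of a permutation. -/
def AslSet (n : ℕ) (w : Equiv.Perm ℕ) : Finset ℕ :=
  (Finset.Ioo 0 n).filter fun i => w i < w (i + 1)

/-- The row in which the entry `i` shows up in a tableau. -/
def rowIdx (T : Tab) (i : ℕ) : ℕ := sInf {r | ∃ c, T (r, c) = i}

/-- The column in which the entry `i` shows up in a tableau. -/
def colIdx (T : Tab) (i : ℕ) : ℕ := sInf {c | T (rowIdx T i, c) = i}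

/-- The box containing the entry `i`. -/
def posOf (T : Tab) (i : ℕ) : ℕ × ℕ := (rowIdx T i, colIdx T i)

/-- Descending indices of a (standard) tableau: `i` with the row of `i+1` strictly below
the row of `i`. -/
def DsiSet (n : ℕ) (T : Tab) : Finset ℕ :=
  (Finset.Ioo 0 n).filter fun i => rowIdx T i < rowIdx T (i + 1)

/-- `Dsi^c`, the complemented descent set `{n - i | i ∈ Dsi}`. -/
def Dsic (n : ℕ) (T : Tab) : Finset ℕ := (DsiSet n T).image fun i => n - i

/-- The entry of `ct_J(S)` at a box `c`: the number of elements of `J` smaller than the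
entry of `S` at `c`. -/
def ctEntry (T : Tab) (J : Finset ℕ) (c : ℕ × ℕ) : ℕ := (J.filter fun j => j < T c).card

/-- The cocharge tableau `ct(S)` of a standard tableau. -/
def ctTab (n : ℕ) (T : Tab) : Tab := fun c => ctEntry T (DsiSet n T) c

/-- The (total) cocharge `cc(S)`: the sum of the entries of `ct(S)`. -/
def ccStat (n : ℕ) (T : Tab) : ℕ :=
  ∑ i ∈ Finset.Icc 1 n, ctEntry T (DsiSet n T) (posOf T i)

/-- `T` is a bijective filling of the given set of cells by `1, …, n` (`n` the number of
cells), with `0` outside. -/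
def IsFillingF (cells : Finset (ℕ × ℕ)) (T : Tab) : Prop :=
  (∀ c, c ∉ cells → T c = 0) ∧ Set.BijOn T ↑cells (Set.Icc 1 cells.card)

/-- A bijective filling of a Young diagram. -/
def IsFilling (μ : YoungDiagram) (T : Tab) : Prop := IsFillingF μ.cells T

/-- A standard Young tableau of shape `μ`: entries strictly increase along rows and columns. -/
def IsStandard (μ : YoungDiagram) (T : Tab) : Prop :=
  IsFilling μ T ∧ ∀ c₁ ∈ μ.cells, ∀ c₂ ∈ μ.cells,
    c₁ ≠ c₂ → c₁.1 ≤ c₂.1 → c₁.2 ≤ c₂.2 → T c₁ < T c₂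

/-! ### Robinson–Schensted -/

/-- Row insertion: insert `x` into a row, returning the new row and the bumped entry. -/
def rowInsert : ℕ → List ℕ → List ℕ × Option ℕ
  | x, [] => ([x], none)
  | x, y :: ys =>
    if x < y then (x :: ys, some y)
    else
      let p := rowInsert x ys
      (y :: p.1, p.2)

/-- Insertion of an entry into a tableau, given as a list of rows. -/
def tabInsert : List (List ℕ) → ℕ → List (List ℕ)
  | [], x => [[x]]
  | r :: rs, x =>
    match rowInsert x r with
    | (r', none) => r' :: rs
    | (r', some y) => r' :: tabInsert rs y

/-- One-line notation of `w ∈ Sₙ`. -/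
def oneLine (n : ℕ) (w : Equiv.Perm ℕ) : List ℕ := (List.range n).map fun i => w (i + 1)

/-- The insertion tableau of the first `m` letters of `w`, as a list of rows. -/
def PtabListPart (n : ℕ) (w : Equiv.Perm ℕ) (m : ℕ) : List (List ℕ) :=
  ((oneLine n w).take m).foldl tabInsert []

/-- Entry of a list-of-rows tableau at a (0-indexed) cell. -/
def listEntry (t : List (List ℕ)) (c : ℕ × ℕ) : ℕ := (t.getD c.1 []).getD c.2 0

/-- The Robinson–Schensted insertion tableau `P(w)`. -/
def Ptab (n : ℕ) (w : Equiv.Perm ℕ) : Tab := fun c => listEntry (PtabListPart n w n) c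

/-- The Robinson–Schensted recording tableau `Q(w)`: the entry of a cell is the step at
which the cell is added to the shape. -/
def Qtab (n : ℕ) (w : Equiv.Perm ℕ) : Tab := fun c =>
  sInf {m | listEntry (PtabListPart n w m) c ≠ 0}

/-! ### Schützenberger evacuation -/

/-- One step of a jeu de taquin slide into the hole at `c`. -/
def slideOnce (T : Tab) (c : ℕ × ℕ) : Tab × (ℕ × ℕ) :=
  let rc : ℕ × ℕ := (c.1, c.2 + 1)
  let dc : ℕ × ℕ := (c.1 + 1, c.2)
  if T rc = 0 ∧ T dc = 0 then (T, c)
  else if T dc = 0 ∨ (T rc ≠ 0 ∧ T rc < T dc) then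
    (Function.update (Function.update T c (T rc)) rc 0, rc)
  else
    (Function.update (Function.update T c (T dc)) dc 0, dc)

/-- Jeu de taquin slide (with fuel). -/
def slide : ℕ → Tab → ℕ × ℕ → Tab × (ℕ × ℕ)
  | 0, T, c => (T, c)
  | k + 1, T, c =>
    let p := slideOnce T c
    if p.2 = c then (T, c) else slide k p.1 p.2

/-- The Schützenberger evacuation: repeatedly delete the minimal entry, slide into the hole,
decrement the remaining entries, and record the vacated cell. -/
def evacAux : ℕ → Tab → Tab
  | 0, _ => fun _ => 0
  | m + 1, T =>
    let c0 := posOf T 1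
    let p := slide (m + 1) (Function.update T c0 0) c0
    Function.update (evacAux m fun c => p.1 c - 1) p.2 (m + 1)

/-- The evacuation tableau `ev S` of a standard tableau with `n` boxes. -/
def evac (n : ℕ) (T : Tab) : Tab := evacAux n T

/-- `Q̃(w) := ev (Q w)`. -/
def Qt (n : ℕ) (w : Equiv.Perm ℕ) : Tab := evac n (Qtab n w)

/-! ### Row and column groups, higher Specht polynomials -/

/-- The identification of `Fin n` with `{1, …, n} ⊆ ℕ`. -/
def finShift (n : ℕ) : Fin n ≃ {i : ℕ // 1 ≤ i ∧ i ≤ n} where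
  toFun j := ⟨(j : ℕ) + 1, by have := j.isLt; omega⟩
  invFun i := ⟨(i : ℕ) - 1, by have := i.2; omega⟩
  left_inv j := by apply Fin.ext; simp
  right_inv i := by apply Subtype.ext; have := i.2; simp; omega

/-- Embedding of the permutations of `Fin n` into permutations of `ℕ` (acting on `{1, …, n}`). -/
def embedPerm (n : ℕ) (σ : Equiv.Perm (Fin n)) : Equiv.Perm ℕ :=
  σ.extendDomain (finShift n)

/-- The row group `R(T)` of a filling, as a finset of permutations of `Fin n`. -/
def rowFinset (n : ℕ) (T : Tab) : Finset (Equiv.Perm (Fin n)) :=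
  Finset.univ.filter fun τ => ∀ i ∈ Finset.Icc 1 n, rowIdx T (embedPerm n τ i) = rowIdx T i

/-- The column group `C(T)` of a filling, as a finset of permutations of `Fin n`. -/
def colFinset (n : ℕ) (T : Tab) : Finset (Equiv.Perm (Fin n)) :=
  Finset.univ.filter fun σ => ∀ i ∈ Finset.Icc 1 n, colIdx T (embedPerm n σ i) = colIdx T i

/-- The row group `R(T)` as a set of permutations of `ℕ`. -/
def rowGroupSet (n : ℕ) (T : Tab) : Set (Equiv.Perm ℕ) :=
  {w | SuppIn n w ∧ ∀ i ∈ Finset.Icc 1 n, rowIdx T (w i) = rowIdx T i}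

/-- The column group `C(T)` as a set of permutations of `ℕ`. -/
def colGroupSet (n : ℕ) (T : Tab) : Set (Equiv.Perm ℕ) :=
  {w | SuppIn n w ∧ ∀ i ∈ Finset.Icc 1 n, colIdx T (w i) = colIdx T i}

/-- The Young symmetrizer `ε_T = Σ_{σ ∈ C(T)} Σ_{τ ∈ R(T)} sgn(σ) σ τ` acting on polynomials
(permutations acting by permuting the variables). -/
def epsAct (n : ℕ) (T : Tab) (p : MvPolynomial ℕ ℚ) : MvPolynomial ℕ ℚ :=
  ∑ σ ∈ colFinset n T, ∑ τ ∈ rowFinset n T,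
    (Equiv.Perm.sign σ : ℤ) • rename (⇑(embedPerm n σ * embedPerm n τ)) p

/-- The monomial `p_T^S = Π_i x_i^{h_i}`, where `h_i` is the entry of `ct S` in the box of
`T` containing `i`. -/
def pTS (n : ℕ) (T S : Tab) : MvPolynomial ℕ ℚ :=
  ∏ i ∈ Finset.Icc 1 n, X i ^ ctEntry S (DsiSet n S) (posOf T i)

/-- `s_T^S`: the order of the stabilizer of `p_T^S` in `R(T)`. -/
def sTS (n : ℕ) (T S : Tab) : ℕ :=
  ((rowFinset n T).filter fun τ =>
    rename (⇑(embedPerm n τ)) (pTS n T S) = pTS n T S).card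

/-- The higher Specht polynomial `F_T^S := ε_T p_T^S / s_T^S`. -/
def FTS (n : ℕ) (T S : Tab) : MvPolynomial ℕ ℚ :=
  ((sTS n T S : ℚ)⁻¹) • epsAct n T (pTS n T S)

/-- The higher Specht polynomial `F_w := F_{P(w)}^{Q̃(w)}` of a permutation. -/
def Fw (n : ℕ) (w : Equiv.Perm ℕ) : MvPolynomial ℕ ℚ := FTS n (Ptab n w) (Qt n w)

/-- The elementary symmetric polynomial `e_r` in the variables `x_1, …, x_n`. -/
def esym (n r : ℕ) : MvPolynomial ℕ ℚ :=
  ∑ s ∈ (Finset.Icc 1 n).powersetCard r, ∏ i ∈ s, X i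

/-- The representation `V^S`: the span of the higher Specht polynomials `F_T^S` over all
bijective fillings `T` of the given cells. -/
def VS (n : ℕ) (cells : Finset (ℕ × ℕ)) (S : Tab) : Submodule ℚ (MvPolynomial ℕ ℚ) :=
  Submodule.span ℚ {p | ∃ T : Tab, IsFillingF cells T ∧ p = FTS n T S}

/-- Multiplication of a subspace of polynomials by a fixed polynomial. -/
def polyMul (q : MvPolynomial ℕ ℚ) (V : Submodule ℚ (MvPolynomial ℕ ℚ)) :
    Submodule ℚ (MvPolynomial ℕ ℚ) :=
  Submodule.map (LinearMap.mulLeft ℚ q) V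

/-- The symmetric multiplier `Π_r e_r^{h_r}`. -/
def eProd (n : ℕ) (h : ℕ → ℕ) : MvPolynomial ℕ ℚ := ∏ r ∈ Finset.Icc 1 n, esym n r ^ h r

/-- `V^S_h := (Π_r e_r^{h_r}) V^S`. -/
def VSh (n : ℕ) (cells : Finset (ℕ × ℕ)) (S : Tab) (h : ℕ → ℕ) :
    Submodule ℚ (MvPolynomial ℕ ℚ) :=
  polyMul (eProd n h) (VS n cells S)

/-! ### The representations `R_{n,I}` -/

/-- For `i ∈ I`, `r_i := #{j ∈ {1,…,n-1} \ I : j < i}`. -/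
def rIdxI (n : ℕ) (I : Finset ℕ) (i : ℕ) : ℕ :=
  ((Finset.Ioo 0 n \ I).filter fun j => j < i).card

/-- The vector `h^S_I`, whose `r`-th entry (for `r ≥ 1`) is `#{i ∈ I \ Dsi^c(S) : r_i = r}`. -/
def hSI (n : ℕ) (I : Finset ℕ) (S : Tab) : ℕ → ℕ := fun r =>
  if 1 ≤ r then ((I \ Dsic n S).filter fun i => rIdxI n I i = r).card else 0

/-- The indicator vector `h(I,S)` of the set `I \ Dsi^c(S)`. -/
def hInd (n : ℕ) (I : Finset ℕ) (S : Tab) : ℕ → ℕ := fun r =>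
  if r ∈ I \ Dsic n S then 1 else 0

/-- `F_{w,I} := F_w · Π_{i ∈ I \ Dsl(w)} e_{r_i}`. -/
def FwI (n : ℕ) (I : Finset ℕ) (w : Equiv.Perm ℕ) : MvPolynomial ℕ ℚ :=
  Fw n w * ∏ i ∈ I \ DslSet n w, esym n (rIdxI n I i)

/-- The homogeneous version `F^hom_{w,I} := F_w · Π_{i ∈ I \ Dsl(w)} e_i`. -/
def FwIhom (n : ℕ) (I : Finset ℕ) (w : Equiv.Perm ℕ) : MvPolynomial ℕ ℚ :=
  Fw n w * ∏ i ∈ I \ DslSet n w, esym n i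

/-- The representation `R_{n,I}`: span of the `F_{w,I}` over `w` with `Dsl(w) ⊆ I`. -/
def RnI (n : ℕ) (I : Finset ℕ) : Submodule ℚ (MvPolynomial ℕ ℚ) :=
  Submodule.span ℚ {p | ∃ w : Equiv.Perm ℕ, SuppIn n w ∧ DslSet n w ⊆ I ∧ p = FwI n I w}

/-- The homogeneous representation `R^hom_{n,I}`. -/
def RnIhom (n : ℕ) (I : Finset ℕ) : Submodule ℚ (MvPolynomial ℕ ℚ) :=
  Submodule.span ℚ {p | ∃ w : Equiv.Perm ℕ, SuppIn n w ∧ DslSet n w ⊆ I ∧ p = FwIhom n I w}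

/-- The index type for the decomposition of `R_{n,I}`: pairs of a partition `λ ⊢ n` and a
standard Young tableau `S` of shape `λ` with `Dsi^c(S) ⊆ I`. -/
def SIdx (n : ℕ) (I : Finset ℕ) : Type :=
  {q : YoungDiagram × Tab // q.1.cells.card = n ∧ IsStandard q.1 q.2 ∧ Dsic n q.2 ⊆ I}

/-! ### Ordered set partitions -/

/-- The cumulative values `j_h` attached to a subset `I ⊆ {1,…,n-1}` (`j_0 = 0`,
`j_h` the `h`-th smallest element, `j_{|I|+1} = n`). -/
def jval (n : ℕ) (I : Finset ℕ) (h : ℕ) : ℕ :=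
  if h = 0 then 0 else if h ≤ I.card then (I.sort (· ≤ ·)).getD (h - 1) 0 else n

/-- The composition `comp_n I`, as a function of the index `0 ≤ h ≤ |I|`. -/
def compFun (n : ℕ) (I : Finset ℕ) (h : ℕ) : ℕ := jval n I (h + 1) - jval n I h

/-- The set `OP_{n,I}` of ordered set partitions of `{1,…,n}` into `|I| + 1` blocks whose
sizes are given by `comp_n I` (blocks indexed by `ℕ`, empty from index `|I| + 1` on). -/
def OPset (n : ℕ) (I : Finset ℕ) : Set (ℕ → Finset ℕ) :=
  {B | (∀ h, I.card + 1 ≤ h → B h = ∅) ∧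
       (∀ h₁ h₂, h₁ ≠ h₂ → Disjoint (B h₁) (B h₂)) ∧
       (∀ h ≤ I.card, (B h).card = compFun n I h) ∧
       Finset.Icc 1 n = (Finset.range (I.card + 1)).biUnion B}

/-- The natural action of a permutation on an ordered set partition. -/
def permOP (w : Equiv.Perm ℕ) (B : ℕ → Finset ℕ) : ℕ → Finset ℕ := fun h => (B h).image w

/-! ### The quotient `R_{n,k}` -/

/-- Elementary symmetric polynomials in `Fin n` variables. -/
def esymFin (n r : ℕ) : MvPolynomial (Fin n) ℚ :=
  ∑ s ∈ (Finset.univ : Finset (Fin n)).powersetCard r, ∏ i ∈ s, X i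

/-- The ideal defining `R_{n,k}`: generated by `x_i^k` and `e_r`, `n-k+1 ≤ r ≤ n`. -/
def Jnk (n k : ℕ) : Ideal (MvPolynomial (Fin n) ℚ) :=
  Ideal.span ((Set.range fun i : Fin n => (X i : MvPolynomial (Fin n) ℚ) ^ k) ∪
    {p | ∃ r, n - k + 1 ≤ r ∧ r ≤ n ∧ p = esymFin n r})

/-- The map sending `x_i` (for `1 ≤ i ≤ n`) to the corresponding variable of
`ℚ[x_1, …, x_n]`, and all other variables to `0`. -/
def toFin (n : ℕ) : MvPolynomial ℕ ℚ →ₐ[ℚ] MvPolynomial (Fin n) ℚ :=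
  aeval fun i => if h : 1 ≤ i ∧ i ≤ n then X (⟨i - 1, by omega⟩ : Fin n) else 0

/-- The quotient projection onto `R_{n,k}`. -/
def projNK (n k : ℕ) : MvPolynomial ℕ ℚ →ₐ[ℚ] (MvPolynomial (Fin n) ℚ ⧸ Jnk n k) :=
  (Ideal.Quotient.mkₐ ℚ (Jnk n k)).comp (toFin n)

/-! ### Corners, insertions and the induction/extension operators -/

/-- `v` is an external corner of `μ`. -/
def IsCorner (μ : YoungDiagram) (v : ℕ × ℕ) : Prop :=
  v ∉ μ.cells ∧ ∃ ν : YoungDiagram, ν.cells = insert v μ.cells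

/-- `S +̃ v := ev (ev S + v)`, where `+ v` places the entry `n + 1` in the box `v`. -/
def Sadd (n : ℕ) (S : Tab) (v : ℕ × ℕ) : Tab :=
  evac (n + 1) (Function.update (evac n S) v (n + 1))

/-- `δ^{S,v}`: `0` if `v` lies strictly below the row of `n` in `ev S`, and `1` otherwise. -/
def deltaSV (n : ℕ) (S : Tab) (v : ℕ × ℕ) : ℕ :=
  if rowIdx (evac n S) n < v.1 then 0 else 1

/-- `h + δ·1_t`: add `δ` to the coordinate `t` of `h` when `t ≥ 1`; do nothing for `t = 0`. -/
def addAt (h : ℕ → ℕ) (t δ : ℕ) : ℕ → ℕ := fun r =>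
  if r = t ∧ 1 ≤ t then h r + δ else h r

/-- The induction operator on a single summand:
`Ind_t V^S_h := ⊕_{v ∈ EC(λ)} V^{S +̃ v}_{h + δ^{S,v}·1_t}`. -/
def IndVSh (t n : ℕ) (μ : YoungDiagram) (S : Tab) (h : ℕ → ℕ) :
    Submodule ℚ (MvPolynomial ℕ ℚ) :=
  ⨆ v : ℕ × ℕ, ⨆ _ : IsCorner μ v,
    VSh (n + 1) (insert v μ.cells) (Sadd n S v) (addAt h t (deltaSV n S v))

/-- The extension operator on a single summand:
`Ext V^S_h := ⊕_{v ∈ EC(λ), δ^{S,v} = 1} V^{S +̃ v}_h`. -/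
def ExtVSh (n : ℕ) (μ : YoungDiagram) (S : Tab) (h : ℕ → ℕ) :
    Submodule ℚ (MvPolynomial ℕ ℚ) :=
  ⨆ v : ℕ × ℕ, ⨆ _ : IsCorner μ v ∧ deltaSV n S v = 1,
    VSh (n + 1) (insert v μ.cells) (Sadd n S v) h

/-- `Ind_t R_{n,I}`, applied summand-by-summand to the decomposition of `R_{n,I}`. -/
def IndR (t n : ℕ) (I : Finset ℕ) : Submodule ℚ (MvPolynomial ℕ ℚ) :=
  ⨆ q : SIdx n I, IndVSh t n q.1.1 q.1.2 (hSI n I q.1.2)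

/-- `Ext R_{n,I}`, applied summand-by-summand. -/
def ExtR (n : ℕ) (I : Finset ℕ) : Submodule ℚ (MvPolynomial ℕ ℚ) :=
  ⨆ q : SIdx n I, ExtVSh n q.1.1 q.1.2 (hSI n I q.1.2)

/-- `Ind_t R^hom_{n,I}`, applied summand-by-summand. -/
def IndRhom (t n : ℕ) (I : Finset ℕ) : Submodule ℚ (MvPolynomial ℕ ℚ) :=
  ⨆ q : SIdx n I, IndVSh t n q.1.1 q.1.2 (hInd n I q.1.2)

/-- `Ext R^hom_{n,I}`, applied summand-by-summand. -/
def ExtRhom (n : ℕ) (I : Finset ℕ) : Submodule ℚ (MvPolynomial ℕ ℚ) :=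
  ⨆ q : SIdx n I, ExtVSh n q.1.1 q.1.2 (hInd n I q.1.2)

/-- The lift `R̃_{n,k} = ⊕_{|I| = k-1} R_{n,I}` of the quotient `R_{n,k}`. -/
def Rtil (n k : ℕ) : Submodule ℚ (MvPolynomial ℕ ℚ) :=
  ⨆ I : Finset ℕ, ⨆ _ : I ⊆ Finset.Ioo 0 n ∧ I.card + 1 = k, RnI n I

/-! ### The extended column group -/

/-- The length of column `c` of a tableau. -/
def colLenT (n : ℕ) (T : Tab) (c : ℕ) : ℕ :=
  ((Finset.range (n + 1)).filter fun r => T (r, c) ≠ 0).card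

/-- `q_a`: the number of columns of length `> a` (columns of length `a` occupy the
`0`-indexed columns `q_a, …, q_a + t_a - 1`). -/
def qaT (n : ℕ) (T : Tab) (a : ℕ) : ℕ :=
  ((Finset.range (n + 1)).filter fun c => a < colLenT n T c).card

/-- `t_a`: the number of columns of length `a`. -/
def taT (n : ℕ) (T : Tab) (a : ℕ) : ℕ :=
  ((Finset.range (n + 1)).filter fun c => colLenT n T c = a).card

/-- The function underlying the permutation `η_T`: the entry in row `j` of column `q_a + i`
is sent to the entry in row `j` of column `q_a + η(i)`; everything else is fixed. -/
def etaFun (n : ℕ) (T : Tab) (a : ℕ) (η : Equiv.Perm ℕ) : ℕ → ℕ := fun m =>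
  let c := colIdx T m
  if 1 ≤ m ∧ m ≤ n ∧ qaT n T a ≤ c ∧ c < qaT n T a + taT n T a then
    T (rowIdx T m, qaT n T a + η (c - qaT n T a))
  else m

/-- The set of the permutations `η_T` (over all `a ≥ 1` and all `η ∈ S_{t_a}`). -/
def etaSet (n : ℕ) (T : Tab) : Set (Equiv.Perm ℕ) :=
  {w | ∃ a, 1 ≤ a ∧ ∃ η : Equiv.Perm ℕ, (∀ i, taT n T a ≤ i → η i = i) ∧
    ⇑w = etaFun n T a η}

/-- The subgroup generated by the permutations `η_T` (a copy of `Π_a S_{t_a}`). -/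
def etaSubgroup (n : ℕ) (T : Tab) : Subgroup (Equiv.Perm ℕ) :=
  Subgroup.closure (etaSet n T)

/-- The column group `C(T)` as a subgroup. -/
def colSubgroup (n : ℕ) (T : Tab) : Subgroup (Equiv.Perm ℕ) :=
  Subgroup.closure (colGroupSet n T)

/-- The extended column group `C̃(T)`, generated by `C(T)` and the `η_T`. -/
def extColSubgroup (n : ℕ) (T : Tab) : Subgroup (Equiv.Perm ℕ) :=
  Subgroup.closure (colGroupSet n T ∪ etaSet n T)

/-- The sign of a permutation of `ℕ` supported on `{1, …, n}`. -/
def signOn (n : ℕ) (σ : Equiv.Perm ℕ) : ℤ :=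
  if h : ∃ τ : Equiv.Perm (Fin n), embedPerm n τ = σ then
    (Equiv.Perm.sign h.choose : ℤ) else 0

/-! ### Semistandard tableaux, (generalized) cocharge tableaux -/

/-- A semistandard filling of the given cells: rows weakly increase, columns strictly
increase (entries outside the cells are normalized to `0`). -/
def IsSSYTOn (cells : Finset (ℕ × ℕ)) (C : Tab) : Prop :=
  (∀ c ∉ cells, C c = 0) ∧
  (∀ c₁ ∈ cells, ∀ c₂ ∈ cells, c₁.1 = c₂.1 → c₁.2 ≤ c₂.2 → C c₁ ≤ C c₂) ∧
  (∀ c₁ ∈ cells, ∀ c₂ ∈ cells, c₁.2 = c₂.2 → c₁.1 < c₂.1 → C c₁ < C c₂)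

/-- A generalized cocharge tableau with entries exactly `{0, …, k-1}`. -/
def IsGCT (cells : Finset (ℕ × ℕ)) (C : Tab) (k : ℕ) : Prop :=
  IsSSYTOn cells C ∧ (∀ c ∈ cells, C c < k) ∧ ∀ h < k, ∃ c ∈ cells, C c = h

/-- The type of a generalized cocharge tableau: the set of cumulative multiplicities
`#{c : C c < h}` for `1 ≤ h ≤ k - 1`. -/
def gctType (cells : Finset (ℕ × ℕ)) (C : Tab) (k : ℕ) : Finset ℕ :=
  (Finset.Ico 1 k).image fun h => (cells.filter fun c => C c < h).card

/-- The standardization of a semistandard tableau: entries are replaced by `1, …, n`,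
processing the values in increasing order and, for equal values, from left to right. -/
def stdz (cells : Finset (ℕ × ℕ)) (C : Tab) : Tab := fun c =>
  if c ∈ cells then
    (cells.filter fun c' => C c' < C c ∨
      (C c' = C c ∧ (c'.2 < c.2 ∨ (c'.2 = c.2 ∧ c'.1 ≤ c.1)))).card
  else 0

/-- A cocharge tableau of shape `μ`: one of the form `ct S` for a standard `S`. -/
def IsCCT (μ : YoungDiagram) (C : Tab) : Prop :=
  ∃ S : Tab, IsStandard μ S ∧ ctTab μ.cells.card S = C

/-- `k` for a tableau: one more than the maximal entry. -/
def kOf (cells : Finset (ℕ × ℕ)) (C : Tab) : ℕ := cells.sup C + 1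

/-- `Dsp^c(C) := {n - i : i ∈ J}`, `J` the type of the cocharge tableau `C`. -/
def Dspc (n : ℕ) (cells : Finset (ℕ × ℕ)) (C : Tab) : Finset ℕ :=
  (gctType cells C (kOf cells C)).image fun i => n - i

/-- The entry sum `Σ(C)`. -/
def entrySum (cells : Finset (ℕ × ℕ)) (C : Tab) : ℕ := ∑ c ∈ cells, C c

/-- `C +̂ v := ct (ct⁻¹(C) +̃ v)`, where `ct⁻¹` is the standardization. -/
def Cadd (n : ℕ) (μ : YoungDiagram) (C : Tab) (v : ℕ × ℕ) : Tab :=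
  ctTab (n + 1) (Sadd n (stdz μ.cells C) v)

/-- The standard Young tableau `S⁰` of shape `μ` filling the rows consecutively. -/
def rowWordTab (μ : YoungDiagram) : Tab := fun c =>
  if c ∈ μ.cells then (∑ r ∈ Finset.range c.1, μ.rowLen r) + c.2 + 1 else 0

/-- The word of an ordered set partition: the blocks listed in order, each sorted
increasingly. -/
def opWord (k : ℕ) (B : ℕ → Finset ℕ) : List ℕ :=
  (List.range k).foldr (fun h acc => (B h).sort (· ≤ ·) ++ acc) []

/-- Renaming the variables of a power series along a permutation. -/
def permSeries (g : Equiv.Perm ℕ) (F : MvPowerSeries ℕ ℚ) : MvPowerSeries ℕ ℚ :=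
  fun m => F (Finsupp.mapDomain ⇑g⁻¹ m)


/-- Ascending indices of a standard tableau (row weakly above and column strictly right). -/
def AsiSet₂ (n : ℕ) (T : Tab) : Finset ℕ :=
  (Finset.Ioo 0 n).filter fun i =>
    rowIdx T (i + 1) ≤ rowIdx T i ∧ colIdx T i < colIdx T (i + 1)

/-- Descending indices of a standard tableau (row strictly below and column weakly left). -/
def DsiSet₂ (n : ℕ) (T : Tab) : Finset ℕ :=
  (Finset.Ioo 0 n).filter fun i =>
    rowIdx T i < rowIdx T (i + 1) ∧ colIdx T (i + 1) ≤ colIdx T i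


/-! ### Auxiliary development for Statement 12: the row bumping lemma -/

section RSAux

/-- Dominance between consecutive rows of a tableau (column-strict increase downwards). -/
def Dom (r q : List ℕ) : Prop :=
  q.length ≤ r.length ∧ ∀ j, j < q.length → r.getD j 0 < q.getD j 0

/-- Validity of a list-of-rows tableau: sorted positive rows, column strict, distinct entries. -/
def Valid (t : List (List ℕ)) : Prop :=
  (∀ r ∈ t, r.Pairwise (· < ·) ∧ ∀ x ∈ r, 0 < x) ∧ t.IsChain Dom ∧ t.flatten.Nodup

theorem Valid.tail {r : List ℕ} {rs : List (List ℕ)} (h : Valid (r :: rs)) : Valid rs := by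
  obtain ⟨h1, h2, h3⟩ := h
  refine ⟨fun q hq => h1 q (List.mem_cons_of_mem _ hq), h2.tail, ?_⟩
  rw [List.flatten_cons, List.nodup_append] at h3
  exact h3.2.1

theorem getD_mid (l r : List ℕ) (a : ℕ) : (l ++ a :: r).getD l.length 0 = a := by
  rw [List.getD_append_right _ _ _ _ le_rfl, Nat.sub_self]
  rfl

theorem getD_mem {l : List ℕ} {j : ℕ} (h : j < l.length) (d : ℕ) : l.getD j d ∈ l := by
  rw [List.getD_eq_getElem _ _ h]
  exact List.getElem_mem _

theorem sorted_getD_lt {r : List ℕ} (h : r.Pairwise (· < ·)) {i j : ℕ} (hij : i < j)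
    (hj : j < r.length) : r.getD i 0 < r.getD j 0 := by
  rw [List.getD_eq_getElem _ _ (hij.trans hj), List.getD_eq_getElem _ _ hj]
  exact List.pairwise_iff_getElem.1 h i j _ _ hij

theorem sorted_getD_le {r : List ℕ} (h : r.Pairwise (· < ·)) {i j : ℕ} (hij : i ≤ j)
    (hj : j < r.length) : r.getD i 0 ≤ r.getD j 0 := by
  rcases hij.lt_or_eq with h' | rfl
  · exact (sorted_getD_lt h h' hj).le
  · exact le_rfl

/-- Characterization of row insertion. -/
theorem rowInsert_cases (x : ℕ) (row : List ℕ) :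
    ((∀ y ∈ row, ¬ x < y) ∧ rowInsert x row = (row ++ [x], none)) ∨
    ∃ l y r, row = l ++ y :: r ∧ (∀ z ∈ l, ¬ x < z) ∧ x < y ∧
      rowInsert x row = (l ++ x :: r, some y) := by
  induction row with
  | nil => exact Or.inl ⟨by simp, by simp [rowInsert]⟩
  | cons a as ih =>
    by_cases hxa : x < a
    · exact Or.inr ⟨[], a, as, rfl, by simp, hxa, by simp [rowInsert, hxa]⟩
    · rcases ih with ⟨h1, h2⟩ | ⟨l, y, r, hrow, hl, hxy, heq⟩
      · refine Or.inl ⟨?_, ?_⟩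
        · intro y hy
          rcases List.mem_cons.1 hy with rfl | hy
          · exact hxa
          · exact h1 y hy
        · simp [rowInsert, hxa, h2]
      · refine Or.inr ⟨a :: l, y, r, by rw [hrow]; rfl, ?_, hxy, ?_⟩
        · intro z hz
          rcases List.mem_cons.1 hz with rfl | hz
          · exact hxa
          · exact hl z hz
        · have hstep : rowInsert x (a :: as) = (a :: (rowInsert x as).1, (rowInsert x as).2) := by
            simp [rowInsert, hxa]
          rw [hstep, heq]
          rfl

/-- The cell added by an insertion. -/
def insPos : List (List ℕ) → ℕ → ℕ × ℕ
  | [], _ => (0, 0)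
  | r :: rs, x =>
    match rowInsert x r with
    | (_, none) => (0, r.length)
    | (_, some y) => ((insPos rs y).1 + 1, (insPos rs y).2)

theorem insPos_cons_none {x : ℕ} {r r' : List ℕ} {rs : List (List ℕ)}
    (h : rowInsert x r = (r', none)) : insPos (r :: rs) x = (0, r.length) := by
  simp [insPos, h]

theorem insPos_cons_some {x y : ℕ} {r r' : List ℕ} {rs : List (List ℕ)}
    (h : rowInsert x r = (r', some y)) :
    insPos (r :: rs) x = ((insPos rs y).1 + 1, (insPos rs y).2) := by
  simp [insPos, h]

theorem tabInsert_cons_none {x : ℕ} {r r' : List ℕ} {rs : List (List ℕ)}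
    (h : rowInsert x r = (r', none)) : tabInsert (r :: rs) x = r' :: rs := by
  simp [tabInsert, h]

theorem tabInsert_cons_some {x y : ℕ} {r r' : List ℕ} {rs : List (List ℕ)}
    (h : rowInsert x r = (r', some y)) : tabInsert (r :: rs) x = r' :: tabInsert rs y := by
  simp [tabInsert, h]

/-- Shape change of a tableau under insertion: exactly the row of the new cell grows by one. -/
theorem tabInsert_rowlen : ∀ (t : List (List ℕ)) (x : ℕ) (r : ℕ),
    ((tabInsert t x).getD r []).length
      = ((t.getD r []).length) + (if r = (insPos t x).1 then 1 else 0) := by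
  intro t
  induction t with
  | nil =>
    intro x r
    cases r <;> simp [tabInsert, insPos]
  | cons q qs ih =>
    intro x r
    rcases rowInsert_cases x q with ⟨h1, h2⟩ | ⟨l, y, rr, hq, hl, hxy, h2⟩
    · rw [tabInsert_cons_none h2, insPos_cons_none h2]
      cases r with
      | zero => simp
      | succ k => simp
    · rw [tabInsert_cons_some h2, insPos_cons_some h2]
      cases r with
      | zero =>
        subst hq
        simp
      | succ k => simpa using ih y k

/-- The column of the new cell is the old length of its row. -/
theorem insPos_snd_eq : ∀ (t : List (List ℕ)) (x : ℕ),
    (insPos t x).2 = (t.getD (insPos t x).1 []).length := by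
  intro t
  induction t with
  | nil => intro x; simp [insPos]
  | cons q qs ih =>
    intro x
    rcases rowInsert_cases x q with ⟨h1, h2⟩ | ⟨l, y, rr, hq, hl, hxy, h2⟩
    · rw [insPos_cons_none h2]; simp
    · rw [insPos_cons_some h2]; simpa using ih y

/-- Path lemma: if all entries of the top row at positions `≥ j` exceed `y`, the insertion of
`y` ends in a column `≤ j`. -/
theorem insPos_col_le : ∀ (rs : List (List ℕ)) (y j : ℕ),
    (∀ r ∈ rs, r.Pairwise (· < ·)) → rs.IsChain Dom →
    (∀ k, j ≤ k → k < (rs.getD 0 []).length → y < (rs.getD 0 []).getD k 0) →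
    (insPos rs y).2 ≤ j := by
  intro rs
  induction rs with
  | nil => intro y j _ _ _; simp [insPos]
  | cons q qs ih =>
    intro y j hs hc hb
    have hq_sorted : q.Pairwise (· < ·) := hs q (List.mem_cons_self)
    rcases rowInsert_cases y q with ⟨h1, h2⟩ | ⟨l, z, rr, hq, hl, hyz, h2⟩
    · rw [insPos_cons_none h2]
      by_contra hlt
      push_neg at hlt
      exact h1 _ (getD_mem hlt 0) (hb j le_rfl (by simpa using hlt))
    · rw [insPos_cons_some h2]
      have hlq : l.length < q.length := by rw [hq]; simp
      have hc0 : l.length ≤ j := by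
        by_contra hlt
        push_neg at hlt
        have hmem : q.getD j 0 ∈ l := by
          rw [hq, List.getD_append _ _ _ _ hlt]
          exact getD_mem hlt 0
        exact hl _ hmem (hb j le_rfl (by simpa using hlt.trans hlq))
      have hz : q.getD l.length 0 = z := by rw [hq]; exact getD_mid _ _ _
      have hrec : (insPos qs z).2 ≤ l.length := by
        apply ih z l.length (fun r hr => hs r (List.mem_cons_of_mem _ hr)) hc.tail
        intro k hk hk2
        cases qs with
        | nil => simp at hk2
        | cons q2 qs2 =>
          have hdom : Dom q q2 := (List.isChain_cons_cons.1 hc).1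
          have hk2' : k < q2.length := by simpa using hk2
          have h3 : q.getD k 0 < q2.getD k 0 := hdom.2 k hk2'
          have h4 : z ≤ q.getD k 0 := by
            rw [← hz]
            exact sorted_getD_le hq_sorted hk (lt_of_lt_of_le hk2' hdom.1)
          simp only [List.getD_cons_zero]
          exact h4.trans_lt h3
      omega

/-- Control of the top row of `tabInsert rs y`: every entry of the new top row is either an old
entry at the same place, or is `y` placed at a position `≤ p`, provided positions `≥ p` of the
old top row exceed `y`. -/
theorem headCtrl (rs : List (List ℕ)) (y p : ℕ)
    (hb : ∀ k, p ≤ k → k < (rs.getD 0 []).length → y < (rs.getD 0 []).getD k 0) :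
    ∀ k, k < ((tabInsert rs y).getD 0 []).length →
      (k < (rs.getD 0 []).length ∧
        ((tabInsert rs y).getD 0 []).getD k 0 = (rs.getD 0 []).getD k 0)
      ∨ (k ≤ p ∧ ((tabInsert rs y).getD 0 []).getD k 0 = y) := by
  cases rs with
  | nil =>
    intro k hk
    simp only [tabInsert] at hk ⊢
    simp only [List.getD_cons_zero] at hk ⊢
    right
    have : k = 0 := by simpa using hk
    subst this
    exact ⟨Nat.zero_le _, rfl⟩
  | cons q qs =>
    rcases rowInsert_cases y q with ⟨h1, h2⟩ | ⟨l, z, rr, hq, hl, hyz, h2⟩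
    · rw [tabInsert_cons_none h2]
      intro k hk
      simp only [List.getD_cons_zero] at hk hb ⊢
      have hqp : q.length ≤ p := by
        by_contra h
        push_neg at h
        exact h1 _ (getD_mem h 0) (hb p le_rfl h)
      rw [List.length_append, List.length_singleton] at hk
      rcases Nat.lt_or_ge k q.length with hk' | hk'
      · exact Or.inl ⟨hk', List.getD_append _ _ _ _ hk'⟩
      · have hke : k = q.length := by omega
        subst hke
        right
        refine ⟨hqp, ?_⟩
        have := getD_mid q ([] : List ℕ) y
        simpa using this
    · rw [tabInsert_cons_some h2]
      intro k hk
      simp only [List.getD_cons_zero] at hk hb ⊢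
      have hlq : l.length < q.length := by rw [hq]; simp
      have hc0 : l.length ≤ p := by
        by_contra hlt
        push_neg at hlt
        have hmem : q.getD p 0 ∈ l := by
          rw [hq, List.getD_append _ _ _ _ hlt]
          exact getD_mem hlt 0
        exact hl _ hmem (hb p le_rfl (hlt.trans hlq))
      have hlen : (l ++ y :: rr).length = q.length := by rw [hq]; simp
      rcases Nat.lt_trichotomy k l.length with hk' | hk' | hk'
      · left
        refine ⟨by omega, ?_⟩
        rw [List.getD_append _ _ _ _ hk', hq, List.getD_append _ _ _ _ hk']
      · subst hk'
        exact Or.inr ⟨hc0, getD_mid _ _ _⟩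
      · left
        refine ⟨by rw [hlen] at hk; exact hk, ?_⟩
        rw [List.getD_append_right _ _ _ _ (by omega), hq,
          List.getD_append_right _ _ _ _ (by omega)]
        have h5 : k - l.length = (k - l.length - 1) + 1 := by omega
        rw [h5]
        rfl

theorem sorted_mid {l rr : List ℕ} {y x : ℕ} (h : (l ++ y :: rr).Pairwise (· < ·))
    (hlx : ∀ z ∈ l, z < x) (hxy : x < y) : (l ++ x :: rr).Pairwise (· < ·) := by
  rw [List.pairwise_append] at h ⊢
  obtain ⟨hl, hyr, hlr⟩ := h
  rw [List.pairwise_cons] at hyr ⊢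
  refine ⟨hl, ⟨fun b hb => hxy.trans (hyr.1 b hb), hyr.2⟩, ?_⟩
  intro a ha b hb
  rcases List.mem_cons.1 hb with rfl | hb
  · exact hlx a ha
  · exact hlr a ha b (List.mem_cons_of_mem _ hb)

/-- Insertion preserves validity, and adds the new entry. -/
theorem tabInsert_valid : ∀ (t : List (List ℕ)) (x : ℕ), Valid t → 0 < x → x ∉ t.flatten →
    Valid (tabInsert t x) ∧ (tabInsert t x).flatten.Perm (x :: t.flatten) := by
  intro t
  induction t with
  | nil =>
    intro x _ hx _
    refine ⟨⟨?_, ?_, ?_⟩, ?_⟩ <;> simp [tabInsert, hx]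
  | cons q qs ih =>
    intro x hv hx hnot
    obtain ⟨hrows, hchain, hnd⟩ := hv
    have hq_sorted : q.Pairwise (· < ·) := (hrows q (List.mem_cons_self)).1
    have hq_pos := (hrows q (List.mem_cons_self)).2
    have hnd' := hnd
    rw [List.flatten_cons, List.nodup_append] at hnd'
    have hx_notq : x ∉ q := fun h => hnot (by rw [List.flatten_cons]; exact List.mem_append_left _ h)
    have hx_notqs : x ∉ qs.flatten := fun h =>
      hnot (by rw [List.flatten_cons]; exact List.mem_append_right _ h)
    have hvqs : Valid qs := Valid.tail ⟨hrows, hchain, hnd⟩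
    rcases rowInsert_cases x q with ⟨h1, h2⟩ | ⟨l, y, rr, hq, hl, hxy, h2⟩
    · -- append at the end of the first row
      rw [tabInsert_cons_none h2]
      have hlt : ∀ z ∈ q, z < x := fun z hz =>
        lt_of_le_of_ne (not_lt.1 (h1 z hz)) (fun h => hx_notq (h ▸ hz))
      have hsorted : (q ++ [x]).Pairwise (· < ·) := by
        rw [List.pairwise_append]
        exact ⟨hq_sorted, by simp, fun a ha b hb => by
          rw [List.mem_singleton] at hb; exact hb ▸ hlt a ha⟩
      have hperm : ((q ++ [x]) :: qs).flatten.Perm (x :: (q :: qs).flatten) := by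
        rw [List.flatten_cons, List.flatten_cons, List.append_assoc]
        exact (List.perm_middle).trans (List.Perm.refl _)
      refine ⟨⟨?_, ?_, ?_⟩, hperm⟩
      · intro r hr
        rcases List.mem_cons.1 hr with rfl | hr
        · refine ⟨hsorted, ?_⟩
          intro z hz
          rcases List.mem_append.1 hz with hz | hz
          · exact hq_pos z hz
          · rw [List.mem_singleton] at hz; exact hz ▸ hx
        · exact hrows r (List.mem_cons_of_mem _ hr)
      · cases qs with
        | nil => simp
        | cons q2 qs2 =>
          rw [List.isChain_cons_cons] at hchain ⊢
          refine ⟨⟨hchain.1.1.trans (by simp), ?_⟩, hchain.2⟩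
          intro j hj
          rw [List.getD_append _ _ _ _ (lt_of_lt_of_le hj hchain.1.1)]
          exact hchain.1.2 j hj
      · exact hperm.symm.nodup (by rw [List.nodup_cons]; exact ⟨hnot, hnd⟩)
    · -- bump case
      rw [tabInsert_cons_some h2]
      have hy_q : y ∈ q := by rw [hq]; exact List.mem_append_right _ (List.mem_cons_self)
      have hy_pos : 0 < y := hq_pos y hy_q
      have hy_notqs : y ∉ qs.flatten := fun h => hnd'.2.2 _ hy_q _ h rfl
      obtain ⟨ihv, ihp⟩ := ih y hvqs hy_pos hy_notqs
      have hlx : ∀ z ∈ l, z < x := fun z hz =>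
        lt_of_le_of_ne (not_lt.1 (hl z hz))
          (fun h => hx_notq (h ▸ (by rw [hq]; exact List.mem_append_left _ hz)))
      have hq_dec : q.Pairwise (· < ·) := hq_sorted
      have hyrr : ∀ z ∈ rr, y < z := by
        have := hq_sorted
        rw [hq, List.pairwise_append, List.pairwise_cons] at this
        exact this.2.1.1
      have hr1_sorted : (l ++ x :: rr).Pairwise (· < ·) := by
        refine sorted_mid (hq ▸ hq_sorted) hlx hxy
      have hr1_pos : ∀ z ∈ l ++ x :: rr, 0 < z := by
        intro z hz
        rcases List.mem_append.1 hz with hz | hz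
        · exact hq_pos z (by rw [hq]; exact List.mem_append_left _ hz)
        · rcases List.mem_cons.1 hz with rfl | hz
          · exact hx
          · refine hq_pos z ?_
            rw [hq]
            exact List.mem_append_right _ (List.mem_cons_of_mem _ hz)
      -- pointwise comparison of the old and new first rows
      have hr1_le : ∀ j, (l ++ x :: rr).getD j 0 ≤ q.getD j 0 := by
        intro j
        rcases Nat.lt_trichotomy j l.length with hj | hj | hj
        · rw [List.getD_append _ _ _ _ hj, hq, List.getD_append _ _ _ _ hj]
        · subst hj
          rw [getD_mid, hq, getD_mid]
          exact hxy.le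
        · rw [List.getD_append_right _ _ _ _ (by omega), hq,
            List.getD_append_right _ _ _ _ (by omega)]
          have h5 : j - l.length = (j - l.length - 1) + 1 := by omega
          rw [h5]
          simp [List.getD_cons_succ]
      -- the bound hypothesis for headCtrl / path lemma
      have hb : ∀ k, l.length ≤ k → k < (qs.getD 0 []).length →
          y < (qs.getD 0 []).getD k 0 := by
        intro k hk hk2
        cases qs with
        | nil => simp at hk2
        | cons q2 qs2 =>
          have hdom : Dom q q2 := (List.isChain_cons_cons.1 hchain).1
          simp only [List.getD_cons_zero] at hk2 ⊢
          have h3 : q.getD k 0 < q2.getD k 0 := hdom.2 k hk2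
          have h4 : y ≤ q.getD k 0 := by
            have : q.getD l.length 0 = y := by rw [hq]; exact getD_mid _ _ _
            rw [← this]
            exact sorted_getD_le hq_sorted hk (lt_of_lt_of_le hk2 hdom.1)
          exact h4.trans_lt h3
      have hperm : ((l ++ x :: rr) :: (tabInsert qs y)).flatten.Perm (x :: (q :: qs).flatten) := by
        rw [List.flatten_cons, List.flatten_cons, hq]
        refine (ihp.append_left (l ++ x :: rr)).trans ?_
        have e1 : (l ++ x :: rr) ++ (y :: qs.flatten) = l ++ x :: (rr ++ y :: qs.flatten) := by
          simp
        have e2 : (l ++ y :: rr) ++ qs.flatten = l ++ y :: (rr ++ qs.flatten) := by simp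
        rw [e1, e2]
        refine List.perm_middle.trans ?_
        exact (List.Perm.append_left l List.perm_middle).cons x
      refine ⟨⟨?_, ?_, ?_⟩, hperm⟩
      · intro r hr
        rcases List.mem_cons.1 hr with rfl | hr
        · exact ⟨hr1_sorted, hr1_pos⟩
        · exact ihv.1 r hr
      · -- chain
        rw [List.isChain_cons]
        refine ⟨?_, ihv.2.1⟩
        intro h hh
        have hhd : (tabInsert qs y).getD 0 [] = h := by
          cases htq : tabInsert qs y with
          | nil => rw [htq] at hh; simp at hh
          | cons a b => rw [htq] at hh; simp at hh; rw [hh]; rfl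
        have hctrl := headCtrl qs y l.length hb
        rw [hhd] at hctrl
        have hlq : l.length < q.length := by rw [hq]; simp
        have hlen_bound : ∀ k, k < h.length → k < q.length := by
          intro k hk
          rcases hctrl k hk with ⟨hk1, _⟩ | ⟨hk1, _⟩
          · cases qs with
            | nil => simp at hk1
            | cons q2 qs2 =>
              have hdom : Dom q q2 := (List.isChain_cons_cons.1 hchain).1
              simp only [List.getD_cons_zero] at hk1
              have := hdom.1
              omega
          · omega
        constructor
        · have : h.length ≤ q.length := by
            by_contra hcon
            push_neg at hcon
            exact absurd (hlen_bound q.length hcon) (lt_irrefl _)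
          rw [List.length_append, List.length_cons]
          rw [hq, List.length_append, List.length_cons] at this
          omega
        · intro j hj
          rcases hctrl j hj with ⟨hj1, hj2⟩ | ⟨hj1, hj2⟩
          · rw [hj2]
            refine lt_of_le_of_lt (hr1_le j) ?_
            cases qs with
            | nil => simp at hj1
            | cons q2 qs2 =>
              have hdom : Dom q q2 := (List.isChain_cons_cons.1 hchain).1
              simp only [List.getD_cons_zero] at hj1 ⊢
              exact hdom.2 j hj1
          · rw [hj2]
            calc (l ++ x :: rr).getD j 0
                ≤ (l ++ x :: rr).getD l.length 0 := by
                  refine sorted_getD_le hr1_sorted hj1 (by simp)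
              _ = x := getD_mid _ _ _
              _ < y := hxy
      · exact hperm.symm.nodup (by rw [List.nodup_cons]; exact ⟨hnot, hnd⟩)

/-- **Row bumping lemma.** If `x` then `x'` are inserted consecutively, with `x < x'` the second
new cell is weakly above and strictly right of the first; with `x' < x` it is strictly below and
weakly left. -/
theorem bump_lemma : ∀ (t : List (List ℕ)) (x x' : ℕ), Valid t → 0 < x → 0 < x' →
    x ∉ t.flatten → x' ∉ t.flatten → x ≠ x' →
    (x < x' → (insPos (tabInsert t x) x').1 ≤ (insPos t x).1 ∧
              (insPos t x).2 < (insPos (tabInsert t x) x').2) ∧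
    (x' < x → (insPos t x).1 < (insPos (tabInsert t x) x').1 ∧
              (insPos (tabInsert t x) x').2 ≤ (insPos t x).2) := by
  intro t
  induction t with
  | nil =>
    intro x x' _ _ _ _ _ hne
    have ht : tabInsert [] x = [[x]] := rfl
    rw [ht]
    constructor
    · intro hlt
      have h1 : rowInsert x' [x] = ([x] ++ [x'], none) := by
        simp [rowInsert, Nat.not_lt.2 hlt.le]
      rw [insPos_cons_none h1]
      simp [insPos]
    · intro hlt
      have h1 : rowInsert x' [x] = (([] : List ℕ) ++ x' :: [], some x) := by
        simp [rowInsert, hlt]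
      rw [insPos_cons_some h1]
      simp [insPos]
  | cons q qs ih =>
    intro x x' hv hx hx' hxn hx'n hne
    obtain ⟨hrows, hchain, hnd⟩ := hv
    have hq_sorted : q.Pairwise (· < ·) := (hrows q (List.mem_cons_self)).1
    have hq_pos := (hrows q (List.mem_cons_self)).2
    have hnd' := hnd
    rw [List.flatten_cons, List.nodup_append] at hnd'
    have hx_notq : x ∉ q := fun h =>
      hxn (by rw [List.flatten_cons]; exact List.mem_append_left _ h)
    have hx'_notq : x' ∉ q := fun h =>
      hx'n (by rw [List.flatten_cons]; exact List.mem_append_left _ h)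
    have hx_notqs : x ∉ qs.flatten := fun h =>
      hxn (by rw [List.flatten_cons]; exact List.mem_append_right _ h)
    have hx'_notqs : x' ∉ qs.flatten := fun h =>
      hx'n (by rw [List.flatten_cons]; exact List.mem_append_right _ h)
    have hvqs : Valid qs := Valid.tail ⟨hrows, hchain, hnd⟩
    have hqs_sorted : ∀ r ∈ qs, r.Pairwise (· < ·) := fun r hr => (hvqs.1 r hr).1
    rcases rowInsert_cases x q with ⟨h1, h2⟩ | ⟨l, y, rr, hq, hl, hxy, h2⟩
    · -- case A : x appended at end of first row
      have hlt : ∀ z ∈ q, z < x := fun z hz =>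
        lt_of_le_of_ne (not_lt.1 (h1 z hz)) (fun h => hx_notq (h ▸ hz))
      rw [insPos_cons_none h2, tabInsert_cons_none h2]
      have hsorted : (q ++ [x]).Pairwise (· < ·) := by
        rw [List.pairwise_append]
        exact ⟨hq_sorted, by simp, fun a ha b hb => by
          rw [List.mem_singleton] at hb; exact hb ▸ hlt a ha⟩
      rcases rowInsert_cases x' (q ++ [x]) with ⟨g1, g2⟩ | ⟨l', y', rr', hq', hl', hxy', g2⟩
      · -- A1
        have hxx' : ¬ x' < x :=
          g1 x (List.mem_append_right _ (List.mem_singleton.2 rfl))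
        rw [insPos_cons_none g2]
        constructor
        · intro _
          constructor
          · simp
          · simp
        · intro h; omega
      · -- A2
        have hy'mem : y' ∈ q ++ [x] := by
          rw [hq']; exact List.mem_append_right _ (List.mem_cons_self)
        have hx'x : x' < x := by
          rcases List.mem_append.1 hy'mem with h | h
          · exact hxy'.trans (hlt _ h)
          · rw [List.mem_singleton] at h
            exact h ▸ hxy'
        rw [insPos_cons_some g2]
        have hll : l'.length ≤ q.length := by
          have := congrArg List.length hq'
          simp at this
          omega
        have hcol : (insPos qs y').2 ≤ l'.length := by
          apply insPos_col_le qs y' l'.length hqs_sorted hvqs.2.1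
          intro k hk hk2
          cases qs with
          | nil => simp at hk2
          | cons q2 qs2 =>
            have hdom : Dom q q2 := (List.isChain_cons_cons.1 hchain).1
            simp only [List.getD_cons_zero] at hk2 ⊢
            have h3 : q.getD k 0 < q2.getD k 0 := hdom.2 k hk2
            have h4 : y' ≤ q.getD k 0 := by
              have e1 : (q ++ [x]).getD l'.length 0 = y' := by
                rw [hq']; exact getD_mid _ _ _
              have e2 : (q ++ [x]).getD k 0 = q.getD k 0 :=
                List.getD_append _ _ _ _ (lt_of_lt_of_le hk2 hdom.1)
              rw [← e2, ← e1]
              refine sorted_getD_le hsorted hk ?_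
              rw [List.length_append, List.length_singleton]
              exact Nat.lt_succ_of_lt (lt_of_lt_of_le hk2 hdom.1)
            exact h4.trans_lt h3
        constructor
        · intro h; omega
        · intro _
          exact ⟨Nat.succ_pos _, hcol.trans hll⟩
    · -- case B : bump in the first row
      rw [insPos_cons_some h2, tabInsert_cons_some h2]
      have hy_q : y ∈ q := by rw [hq]; exact List.mem_append_right _ (List.mem_cons_self)
      have hy_pos : 0 < y := hq_pos y hy_q
      have hy_notqs : y ∉ qs.flatten := fun h => hnd'.2.2 _ hy_q _ h rfl
      have hlx : ∀ z ∈ l, z < x := fun z hz =>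
        lt_of_le_of_ne (not_lt.1 (hl z hz))
          (fun h => hx_notq (h ▸ (by rw [hq]; exact List.mem_append_left _ hz)))
      have hyrr : ∀ z ∈ rr, y < z := by
        have h5 := hq_sorted
        rw [hq, List.pairwise_append, List.pairwise_cons] at h5
        exact h5.2.1.1
      have hr1_sorted : (l ++ x :: rr).Pairwise (· < ·) := sorted_mid (hq ▸ hq_sorted) hlx hxy
      have hlq : l.length < q.length := by rw [hq]; simp
      have hPL : (insPos qs y).2 ≤ l.length := by
        apply insPos_col_le qs y l.length hqs_sorted hvqs.2.1
        intro k hk hk2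
        cases qs with
        | nil => simp at hk2
        | cons q2 qs2 =>
          have hdom : Dom q q2 := (List.isChain_cons_cons.1 hchain).1
          simp only [List.getD_cons_zero] at hk2 ⊢
          have h3 : q.getD k 0 < q2.getD k 0 := hdom.2 k hk2
          have h4 : y ≤ q.getD k 0 := by
            have e1 : q.getD l.length 0 = y := by rw [hq]; exact getD_mid _ _ _
            rw [← e1]
            exact sorted_getD_le hq_sorted hk (lt_of_lt_of_le hk2 hdom.1)
          exact h4.trans_lt h3
      rcases rowInsert_cases x' (l ++ x :: rr) with ⟨g1, g2⟩ | ⟨l', y', rr', hq', hl', hxy', g2⟩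
      · -- B1 : x' appended at the end of the new first row
        have hxx' : ¬ x' < x :=
          g1 x (List.mem_append.2 (Or.inr (List.mem_cons_self)))
        rw [insPos_cons_none g2]
        constructor
        · intro _
          refine ⟨Nat.zero_le _, ?_⟩
          have hlen : (l ++ x :: rr).length = q.length := by rw [hq]; simp
          omega
        · intro h; omega
      · -- B2 : x' bumps y' from the new first row
        rw [insPos_cons_some g2]
        have hy'r1 : y' ∈ l ++ x :: rr := by
          rw [hq']; exact List.mem_append_right _ (List.mem_cons_self)
        have hy'_pos : 0 < y' := by
          rcases List.mem_append.1 hy'r1 with h | h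
          · exact hq_pos _ (by rw [hq]; exact List.mem_append_left _ h)
          · rcases List.mem_cons.1 h with rfl | h
            · exact hx
            · exact hq_pos _
                (by rw [hq]; exact List.mem_append_right _ (List.mem_cons_of_mem _ h))
        have hy'_notqs : y' ∉ qs.flatten := by
          rcases List.mem_append.1 hy'r1 with h | h
          · exact fun hmem => hnd'.2.2 _ (by rw [hq]; exact List.mem_append_left _ h) _ hmem rfl
          · rcases List.mem_cons.1 h with rfl | h
            · exact hx_notqs
            · exact fun hmem => hnd'.2.2 _
                (by rw [hq]; exact List.mem_append_right _ (List.mem_cons_of_mem _ h)) _ hmem rfl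
        rcases lt_or_gt_of_ne hne with hxx' | hx'x
        · -- x < x' : then y < y'
          have hyy' : y < y' := by
            rcases List.mem_append.1 hy'r1 with h | h
            · have := hlx _ h
              omega
            · rcases List.mem_cons.1 h with h | h
              · omega
              · exact hyrr _ h
          obtain ⟨hI, _⟩ := ih y y' hvqs hy_pos hy'_pos hy_notqs hy'_notqs (ne_of_lt hyy')
          obtain ⟨ha, hb2⟩ := hI hyy'
          constructor
          · intro _
            exact ⟨by omega, hb2⟩
          · intro h
            omega
        · -- x' < x : then y' < y
          have hp'p : l'.length ≤ l.length := by
            by_contra hcon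
            push_neg at hcon
            have hxl' : (l ++ x :: rr).getD l.length 0 ∈ l' := by
              rw [hq', List.getD_append _ _ _ _ hcon]
              exact getD_mem hcon 0
            have hgd : (l ++ x :: rr).getD l.length 0 = x := getD_mid _ _ _
            have := hl' _ hxl'
            rw [hgd] at this
            omega
          have hy'x : y' ≤ x := by
            have e1 : (l ++ x :: rr).getD l'.length 0 = y' := by
              rw [hq']; exact getD_mid _ _ _
            have e2 : (l ++ x :: rr).getD l.length 0 = x := getD_mid _ _ _
            calc y' = (l ++ x :: rr).getD l'.length 0 := e1.symm
              _ ≤ (l ++ x :: rr).getD l.length 0 := sorted_getD_le hr1_sorted hp'p (by simp)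
              _ = x := e2
          have hy'y : y' < y := by omega
          obtain ⟨_, hI⟩ := ih y y' hvqs hy_pos hy'_pos hy_notqs hy'_notqs (ne_of_gt hy'y)
          obtain ⟨ha, hb2⟩ := hI hy'y
          constructor
          · intro h
            omega
          · intro _
            exact ⟨by omega, hb2⟩

theorem oneLine_length (n : ℕ) (w : Equiv.Perm ℕ) : (oneLine n w).length = n := by
  simp [oneLine]

theorem P_zero (n : ℕ) (w : Equiv.Perm ℕ) : PtabListPart n w 0 = [] := by
  simp [PtabListPart]

theorem P_step (n : ℕ) (w : Equiv.Perm ℕ) {m : ℕ} (hm : m < n) :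
    PtabListPart n w (m + 1) = tabInsert (PtabListPart n w m) (w (m + 1)) := by
  unfold PtabListPart
  rw [List.take_succ]
  have hget : (oneLine n w)[m]? = some (w (m + 1)) := by
    unfold oneLine
    rw [List.getElem?_map, List.getElem?_range hm]
    rfl
  rw [hget]
  simp [List.foldl_append]

theorem P_stable (n : ℕ) (w : Equiv.Perm ℕ) {m : ℕ} (hm : n ≤ m) :
    PtabListPart n w m = PtabListPart n w n := by
  unfold PtabListPart
  rw [List.take_of_length_le (by rw [oneLine_length]; exact hm),
    List.take_of_length_le (by rw [oneLine_length])]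

theorem P_main (n : ℕ) (w : Equiv.Perm ℕ) (hw : SuppIn n w) :
    ∀ m, m ≤ n → Valid (PtabListPart n w m) ∧
      (PtabListPart n w m).flatten.Perm ((List.range m).map fun j => w (j + 1)) := by
  intro m
  induction m with
  | zero =>
    intro _
    rw [P_zero]
    exact ⟨⟨by simp, by simp, by simp⟩, by simp⟩
  | succ m ih =>
    intro hm
    obtain ⟨hv, hperm⟩ := ih (Nat.le_of_succ_le hm)
    have hx : 0 < w (m + 1) := by
      rcases Nat.eq_zero_or_pos (w (m + 1)) with h | h
      · have h0 : w 0 = 0 := hw 0 (Or.inl rfl)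
        have := w.injective (h.trans h0.symm)
        omega
      · exact h
    have hnot : w (m + 1) ∉ (PtabListPart n w m).flatten := by
      intro h
      have hmem := hperm.subset h
      rw [List.mem_map] at hmem
      obtain ⟨j, hj, hj2⟩ := hmem
      rw [List.mem_range] at hj
      have := w.injective hj2
      omega
    obtain ⟨h1, h2⟩ := tabInsert_valid _ _ hv hx hnot
    rw [P_step n w (Nat.lt_of_succ_le hm)]
    refine ⟨h1, h2.trans ?_⟩
    rw [List.range_succ, List.map_append]
    exact (hperm.cons _).trans (List.perm_append_singleton _ _).symm

theorem listEntry_ne_zero_iff {t : List (List ℕ)} (hv : Valid t) (c : ℕ × ℕ) :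
    listEntry t c ≠ 0 ↔ c.2 < (t.getD c.1 []).length := by
  have hE : listEntry t c = (t.getD c.1 []).getD c.2 0 := rfl
  rw [hE]
  constructor
  · intro h
    by_contra h2
    push_neg at h2
    exact h (List.getD_eq_default _ _ h2)
  · intro h
    by_cases hc : c.1 < t.length
    · have hmem : t.getD c.1 [] ∈ t := by
        rw [List.getD_eq_getElem _ _ hc]
        exact List.getElem_mem _
      exact ((hv.1 _ hmem).2 _ (getD_mem h 0)).ne'
    · exfalso
      rw [List.getD_eq_default _ _ (not_lt.1 hc)] at h
      simp at h

theorem rlen_mono (n : ℕ) (w : Equiv.Perm ℕ) (r : ℕ) :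
    Monotone fun m => ((PtabListPart n w m).getD r []).length := by
  apply monotone_nat_of_le_succ
  intro m
  by_cases hm : m < n
  · show ((PtabListPart n w m).getD r []).length ≤ ((PtabListPart n w (m + 1)).getD r []).length
    rw [P_step n w hm, tabInsert_rowlen]
    omega
  · show ((PtabListPart n w m).getD r []).length ≤ ((PtabListPart n w (m + 1)).getD r []).length
    rw [P_stable n w (by omega : n ≤ m + 1), P_stable n w (by omega : n ≤ m)]

theorem Qtab_at_B (n : ℕ) (w : Equiv.Perm ℕ) (hw : SuppIn n w) {m : ℕ} (hm : m < n) :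
    Qtab n w (insPos (PtabListPart n w m) (w (m + 1))) = m + 1 := by
  have hvm1 := (P_main n w hw (m + 1) hm).1
  have hstep := P_step n w hm
  have hsnd := insPos_snd_eq (PtabListPart n w m) (w (m + 1))
  have hmem : listEntry (PtabListPart n w (m + 1))
      (insPos (PtabListPart n w m) (w (m + 1))) ≠ 0 := by
    rw [listEntry_ne_zero_iff hvm1, hstep, tabInsert_rowlen, if_pos rfl]
    omega
  have hlb : ∀ k, listEntry (PtabListPart n w k)
      (insPos (PtabListPart n w m) (w (m + 1))) ≠ 0 → m + 1 ≤ k := by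
    intro k hk
    by_contra hcon
    push_neg at hcon
    have hvk := (P_main n w hw k (by omega)).1
    rw [listEntry_ne_zero_iff hvk] at hk
    have hmono := rlen_mono n w (insPos (PtabListPart n w m) (w (m + 1))).1
      (show k ≤ m by omega)
    simp only at hmono
    omega
  exact le_antisymm (Nat.sInf_le hmem) (le_csInf ⟨m + 1, hmem⟩ hlb)

theorem Qtab_eq_B (n : ℕ) (w : Equiv.Perm ℕ) (hw : SuppIn n w) {m : ℕ} (hm : m < n)
    {c : ℕ × ℕ} (hc : Qtab n w c = m + 1) :
    c = insPos (PtabListPart n w m) (w (m + 1)) := by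
  have hq : Qtab n w c = sInf {k | listEntry (PtabListPart n w k) c ≠ 0} := rfl
  rw [hq] at hc
  have hne : {k | listEntry (PtabListPart n w k) c ≠ 0}.Nonempty := by
    by_contra h
    rw [Set.not_nonempty_iff_eq_empty] at h
    rw [h, Nat.sInf_empty] at hc
    omega
  have hmem := Nat.sInf_mem hne
  rw [hc] at hmem
  have hnm : m ∉ {k | listEntry (PtabListPart n w k) c ≠ 0} := by
    intro h
    have := Nat.sInf_le h
    omega
  have hvm1 := (P_main n w hw (m + 1) hm).1
  have hvm := (P_main n w hw m (le_of_lt hm)).1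
  rw [Set.mem_setOf_eq, listEntry_ne_zero_iff hvm1] at hmem
  rw [Set.mem_setOf_eq, listEntry_ne_zero_iff hvm, not_lt] at hnm
  rw [P_step n w hm, tabInsert_rowlen] at hmem
  by_cases hc1 : c.1 = (insPos (PtabListPart n w m) (w (m + 1))).1
  · rw [if_pos hc1] at hmem
    have hsnd := insPos_snd_eq (PtabListPart n w m) (w (m + 1))
    rw [← hc1] at hsnd
    have hc2 : c.2 = (insPos (PtabListPart n w m) (w (m + 1))).2 := by omega
    exact Prod.ext hc1 hc2
  · rw [if_neg hc1] at hmem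
    omega

theorem rowIdx_Qtab (n : ℕ) (w : Equiv.Perm ℕ) (hw : SuppIn n w) {m : ℕ} (hm : m < n) :
    rowIdx (Qtab n w) (m + 1) = (insPos (PtabListPart n w m) (w (m + 1))).1 := by
  have hset : {r | ∃ c, Qtab n w (r, c) = m + 1}
      = {(insPos (PtabListPart n w m) (w (m + 1))).1} := by
    ext r
    simp only [Set.mem_setOf_eq, Set.mem_singleton_iff]
    constructor
    · rintro ⟨c, hc⟩
      have h := Qtab_eq_B n w hw hm hc
      rw [Prod.ext_iff] at h
      exact h.1
    · rintro rfl
      refine ⟨(insPos (PtabListPart n w m) (w (m + 1))).2, ?_⟩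
      have h := Qtab_at_B n w hw hm
      simpa using h
  rw [rowIdx, hset, csInf_singleton]

theorem colIdx_Qtab (n : ℕ) (w : Equiv.Perm ℕ) (hw : SuppIn n w) {m : ℕ} (hm : m < n) :
    colIdx (Qtab n w) (m + 1) = (insPos (PtabListPart n w m) (w (m + 1))).2 := by
  have hrow := rowIdx_Qtab n w hw hm
  have hset : {c | Qtab n w (rowIdx (Qtab n w) (m + 1), c) = m + 1}
      = {(insPos (PtabListPart n w m) (w (m + 1))).2} := by
    ext c
    simp only [Set.mem_setOf_eq, Set.mem_singleton_iff]
    constructor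
    · intro hc
      have h := Qtab_eq_B n w hw hm hc
      rw [Prod.ext_iff] at h
      exact h.2
    · rintro rfl
      rw [hrow]
      have h := Qtab_at_B n w hw hm
      simpa using h
  rw [colIdx, hset, csInf_singleton]

theorem keyLemma (n : ℕ) (w : Equiv.Perm ℕ) (hw : SuppIn n w) {i : ℕ}
    (hi1 : 0 < i) (hi2 : i < n) :
    (w i < w (i + 1) → rowIdx (Qtab n w) (i + 1) ≤ rowIdx (Qtab n w) i ∧
        colIdx (Qtab n w) i < colIdx (Qtab n w) (i + 1)) ∧
    (w (i + 1) < w i → rowIdx (Qtab n w) i < rowIdx (Qtab n w) (i + 1) ∧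
        colIdx (Qtab n w) (i + 1) ≤ colIdx (Qtab n w) i) := by
  obtain ⟨m, rfl⟩ : ∃ m, i = m + 1 := ⟨i - 1, by omega⟩
  have hmn : m < n := by omega
  have hm1n : m + 1 < n := hi2
  have hr1 := rowIdx_Qtab n w hw hmn
  have hc1 := colIdx_Qtab n w hw hmn
  have hr2 := rowIdx_Qtab n w hw hm1n
  have hc2 := colIdx_Qtab n w hw hm1n
  obtain ⟨hv, hperm⟩ := P_main n w hw m (by omega)
  have hstep := P_step n w hmn
  rw [hstep] at hr2 hc2
  have h0 : w 0 = 0 := hw 0 (Or.inl rfl)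
  have hx : 0 < w (m + 1) := by
    rcases Nat.eq_zero_or_pos (w (m + 1)) with h | h
    · have := w.injective (h.trans h0.symm); omega
    · exact h
  have hx' : 0 < w (m + 1 + 1) := by
    rcases Nat.eq_zero_or_pos (w (m + 1 + 1)) with h | h
    · have := w.injective (h.trans h0.symm); omega
    · exact h
  have hnotmem : ∀ z, z ∈ (PtabListPart n w m).flatten → ∃ j, j < m ∧ w (j + 1) = z := by
    intro z hz
    have hmem := hperm.subset hz
    rw [List.mem_map] at hmem
    obtain ⟨j, hj, hj2⟩ := hmem
    exact ⟨j, List.mem_range.1 hj, hj2⟩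
  have hn1 : w (m + 1) ∉ (PtabListPart n w m).flatten := by
    intro h
    obtain ⟨j, hj, hj2⟩ := hnotmem _ h
    have := w.injective hj2
    omega
  have hn2 : w (m + 1 + 1) ∉ (PtabListPart n w m).flatten := by
    intro h
    obtain ⟨j, hj, hj2⟩ := hnotmem _ h
    have := w.injective hj2
    omega
  have hne : w (m + 1) ≠ w (m + 1 + 1) := fun h => by
    have := w.injective h
    omega
  have hbl := bump_lemma (PtabListPart n w m) (w (m + 1)) (w (m + 1 + 1)) hv hx hx' hn1 hn2 hne
  rw [hr1, hc1, hr2, hc2]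
  exact hbl

end RSAux

/-- For every `w ∈ Sₙ`, `Asl(w) = Asi(Q(w))` and `Dsl(w) = Dsi(Q(w))`. -/
theorem statement_12 (n : ℕ) (w : Equiv.Perm ℕ) (hw : SuppIn n w) :
    AslSet n w = AsiSet₂ n (Qtab n w) ∧ DslSet n w = DsiSet₂ n (Qtab n w) := by
  have key : ∀ i ∈ Finset.Ioo 0 n,
      ((w i < w (i + 1)) ↔ (rowIdx (Qtab n w) (i + 1) ≤ rowIdx (Qtab n w) i ∧
        colIdx (Qtab n w) i < colIdx (Qtab n w) (i + 1))) ∧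
      ((w (i + 1) < w i) ↔ (rowIdx (Qtab n w) i < rowIdx (Qtab n w) (i + 1) ∧
        colIdx (Qtab n w) (i + 1) ≤ colIdx (Qtab n w) i)) := by
    intro i hi
    rw [Finset.mem_Ioo] at hi
    obtain ⟨h1, h2⟩ := keyLemma n w hw hi.1 hi.2
    have hne : w i ≠ w (i + 1) := fun h => by
      have := w.injective h
      omega
    constructor
    · constructor
      · exact h1
      · intro hcon
        rcases lt_or_gt_of_ne hne with h | h
        · exact h
        · have := h2 h
          omega
    · constructor
      · exact h2
      · intro hcon
        rcases lt_or_gt_of_ne hne with h | h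
        · have := h1 h
          omega
        · exact h
  constructor
  · rw [AslSet, AsiSet₂]
    apply Finset.filter_congr
    intro i hi
    exact (key i hi).1
  · rw [DslSet, DsiSet₂]
    apply Finset.filter_congr
    intro i hi
    exact (key i hi).2

end HigherSpecht
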